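/- (Guessing Geodesics Lemma.) For every real λ ≥ 0 there exists δ ≥ 0 such that the following holds. Let Γ be a connected simple graph with vertex set V and graph distance d. Suppose that for every pair x, y ∈ V there is a set L(x,y) ⊆ V containing x and y whose induced subgraph of Γ is connected, such that (i) for all x, y, z ∈ V, every vertex of L(x,y) is within distance λ of some vertex of L(x,z) ∪ L(z,y), and (ii) whenever d(x,y) ≤ 1 the set L(x,y) has diameter at most λ with respect to d. Then d is δ-hyperbolic: for all w, x, y, z ∈ V, (x·z)_w ≥ min((x·y)_w, (y·z)_w) − δ. -/

import Mathlib

set_option maxHeartbeats 1000000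

open SimpleGraph

/-- `m * m ≤ 2 ^ m` for `m ≥ 4`. -/
lemma aux_sq_le_two_pow : ∀ m : ℕ, 4 ≤ m → m * m ≤ 2 ^ m := by
  intro m hm
  induction m with
  | zero => omega
  | succ m IH =>
    rcases Nat.lt_or_ge m 4 with hlt | hge
    · have : m = 3 := by omega
      subst this; norm_num
    · have h1 : m * m ≤ 2 ^ m := IH hge
      have h2 : 2 * m + 1 ≤ m * m := by nlinarith
      have h3 : 2 ^ (m + 1) = 2 ^ m + 2 ^ m := by rw [pow_succ]; ring
      have h4 : (m + 1) * (m + 1) = m * m + (2 * m + 1) := by ring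
      omega

/-- **Guessing Geodesics Lemma.** For every `λ ≥ 0` there is `δ ≥ 0` such that: if `Γ` is a
connected simple graph and for every pair of vertices `x, y` there is a set `L x y` of vertices
containing `x` and `y`, inducing a connected subgraph, satisfying the `λ`-slimness condition (i)
and the small-diameter condition (ii), then the graph distance satisfies the four-point
`δ`-hyperbolicity condition for the Gromov product. -/
theorem stmt4 :
    ∀ lam : ℝ, 0 ≤ lam → ∃ δ : ℝ, 0 ≤ δ ∧
      ∀ (V : Type) (Γ : SimpleGraph V), Γ.Connected →
        ∀ L : V → V → Set V,
          (∀ x y : V, x ∈ L x y ∧ y ∈ L x y ∧ (Γ.induce (L x y)).Connected) →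
          (∀ x y z : V, ∀ v ∈ L x y, ∃ u ∈ L x z ∪ L z y, (Γ.dist v u : ℝ) ≤ lam) →
          (∀ x y : V, Γ.dist x y ≤ 1 →
            ∀ u ∈ L x y, ∀ v ∈ L x y, (Γ.dist u v : ℝ) ≤ lam) →
          ∀ w x y z : V,
            ((Γ.dist x w : ℝ) + (Γ.dist z w : ℝ) - (Γ.dist x z : ℝ)) / 2 ≥
              min (((Γ.dist x w : ℝ) + (Γ.dist y w : ℝ) - (Γ.dist x y : ℝ)) / 2)
                  (((Γ.dist y w : ℝ) + (Γ.dist z w : ℝ) - (Γ.dist y z : ℝ)) / 2) - δ := by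
  intro lam hlam
  -- the basic constants
  set μ : ℝ := max lam 1 with hμdef
  have hμ1 : (1 : ℝ) ≤ μ := le_max_right _ _
  have hlamμ : lam ≤ μ := le_max_left _ _
  have hμ0 : (0 : ℝ) < μ := by linarith
  set B : ℕ := max 5 ⌈(24 : ℝ) * μ⌉₊ with hBdef
  have hB5 : (5 : ℕ) ≤ B := le_max_left _ _
  have hB24 : (24 : ℝ) * μ ≤ (B : ℝ) := by
    calc (24 : ℝ) * μ ≤ (⌈(24 : ℝ) * μ⌉₊ : ℝ) := Nat.le_ceil _
    _ ≤ (B : ℝ) := by exact_mod_cast Nat.cast_le.mpr (le_max_right _ _)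
  have hBR : (5 : ℝ) ≤ (B : ℝ) := by exact_mod_cast hB5
  set K₁ : ℝ := μ * ((B : ℝ) + 3) with hK₁def
  have hK₁pos : 0 < K₁ := by nlinarith
  have hK₁8 : 8 * μ ≤ K₁ := by nlinarith
  refine ⟨3 * K₁ + 4 * μ + 1, by nlinarith, ?_⟩
  intro V Γ hconn L hLmem hslim hsmall
  have hxmem : ∀ x y : V, x ∈ L x y := fun x y => (hLmem x y).1
  have hymem : ∀ x y : V, y ∈ L x y := fun x y => (hLmem x y).2.1
  -- triangle inequality
  have htri : ∀ a b c : V, Γ.dist a c ≤ Γ.dist a b + Γ.dist b c :=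
    fun a b c => hconn.dist_triangle
  have hself : ∀ a : V, Γ.dist a a = 0 := fun a => SimpleGraph.dist_self
  -- chains move at speed 1
  have chainLe : ∀ (f : ℕ → V) (n : ℕ), (∀ i < n, Γ.dist (f i) (f (i + 1)) ≤ 1) →
      ∀ d i, i + d ≤ n → Γ.dist (f i) (f (i + d)) ≤ d := by
    intro f n hstep d
    induction d with
    | zero => intro i _; simp
    | succ d IH =>
      intro i h
      have h1 : Γ.dist (f i) (f (i + d)) ≤ d := IH i (by omega)
      have h2 : Γ.dist (f (i + d)) (f (i + d + 1)) ≤ 1 := hstep _ (by omega)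
      have h3 := htri (f i) (f (i + d)) (f (i + d + 1))
      show Γ.dist (f i) (f (i + d + 1)) ≤ d + 1
      omega
  -- on geodesic chains, distances are exact
  have geod : ∀ (f : ℕ → V) (n : ℕ), (∀ i < n, Γ.dist (f i) (f (i + 1)) ≤ 1) →
      n = Γ.dist (f 0) (f n) → ∀ i j, i ≤ j → j ≤ n → Γ.dist (f i) (f j) = j - i := by
    intro f n hstep hgeo i j hij hjn
    have h1 : Γ.dist (f 0) (f i) ≤ i := by
      have := chainLe f n hstep i 0 (by omega); simpa using this
    have h2 : Γ.dist (f i) (f j) ≤ j - i := by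
      have := chainLe f n hstep (j - i) i (by omega)
      have hrw : i + (j - i) = j := by omega
      rwa [hrw] at this
    have h3 : Γ.dist (f j) (f n) ≤ n - j := by
      have := chainLe f n hstep (n - j) j (by omega)
      have hrw : j + (n - j) = n := by omega
      rwa [hrw] at this
    have t1 := htri (f 0) (f i) (f j)
    have t2 := htri (f 0) (f j) (f n)
    omega
  -- Claim A : points of L x y are within μ(k+1) of any chain of length ≤ 2^k
  have claimA : ∀ k : ℕ, ∀ x y v : V, v ∈ L x y → ∀ (f : ℕ → V) (n : ℕ),
      f 0 = x → f n = y → (∀ i < n, Γ.dist (f i) (f (i + 1)) ≤ 1) → n ≤ 2 ^ k →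
      ∃ i, i ≤ n ∧ (Γ.dist v (f i) : ℝ) ≤ μ * (k + 1) := by
    intro k
    induction k with
    | zero =>
      intro x y v hv f n h0 hn hstep hle
      refine ⟨0, Nat.zero_le _, ?_⟩
      rw [h0]
      have hxy : Γ.dist x y ≤ 1 := by
        interval_cases n
        · rw [← h0, ← hn, hself]; omega
        · rw [← h0, ← hn]; exact hstep 0 (by omega)
      have := hsmall x y hxy v hv x (hxmem x y)
      push_cast
      linarith
    | succ k IH =>
      intro x y v hv f n h0 hn hstep hle
      set h := min n (2 ^ k) with hh
      have hhn : h ≤ n := min_le_left _ _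
      obtain ⟨u, hu, hdu⟩ := hslim x y (f h) v hv
      have h2k : (2:ℕ) ^ (k+1) = 2 ^ k + 2 ^ k := by rw [pow_succ]; ring
      rcases hu with hu | hu
      · obtain ⟨i, hi, hb⟩ := IH x (f h) u hu f h h0 rfl
          (fun i hi => hstep i (by omega)) (min_le_right _ _)
        refine ⟨i, by omega, ?_⟩
        have ht : Γ.dist v (f i) ≤ Γ.dist v u + Γ.dist u (f i) := htri _ _ _
        have ht' : (Γ.dist v (f i) : ℝ) ≤ (Γ.dist v u : ℝ) + (Γ.dist u (f i) : ℝ) := by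
          exact_mod_cast ht
        push_cast
        push_cast at hb
        linarith
      · obtain ⟨i, hi, hb⟩ := IH (f h) y u hu (fun i => f (h + i)) (n - h)
          (by simp) (by show f (h + (n - h)) = y; rw [Nat.add_sub_cancel' hhn]; exact hn)
          (fun i hi => by
            show Γ.dist (f (h + i)) (f (h + i + 1)) ≤ 1
            exact hstep (h + i) (by omega))
          (by omega)
        refine ⟨h + i, by omega, ?_⟩
        have ht : Γ.dist v (f (h + i)) ≤ Γ.dist v u + Γ.dist u (f (h + i)) := htri _ _ _
        have ht' : (Γ.dist v (f (h + i)) : ℝ) ≤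
            (Γ.dist v u : ℝ) + (Γ.dist u (f (h + i)) : ℝ) := by exact_mod_cast ht
        push_cast
        push_cast at hb
        linarith
  -- Claim H : points of L x y are within K₁ of any geodesic chain from x to y
  have claimH : ∀ n : ℕ, ∀ x y v : V, v ∈ L x y → ∀ f : ℕ → V,
      f 0 = x → f n = y → (∀ i < n, Γ.dist (f i) (f (i + 1)) ≤ 1) → n = Γ.dist x y →
      ∃ i, i ≤ n ∧ (Γ.dist v (f i) : ℝ) ≤ K₁ := by
    intro n
    induction n using Nat.strong_induction_on with
    | _ n IH =>
    intro x y v hv f h0 hn hstep hgeon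
    by_contra hcon
    push_neg at hcon
    -- hcon : ∀ i ≤ n, K₁ < dist v (f i)
    have hgeo' : n = Γ.dist (f 0) (f n) := by rw [h0, hn]; exact hgeon
    obtain ⟨t, htmem, htmin⟩ := Finset.exists_min_image (Finset.range (n + 1))
      (fun i => Γ.dist v (f i)) ⟨0, by simp⟩
    have ht : t ≤ n := by have := Finset.mem_range.mp htmem; omega
    set D := Γ.dist v (f t) with hD
    have htmin' : ∀ i, i ≤ n → D ≤ Γ.dist v (f i) := by
      intro i hi
      exact htmin i (Finset.mem_range.mpr (by omega))
    have hDK : K₁ < (D : ℝ) := hcon t ht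
    have hD1 : 1 ≤ D := by
      by_contra hD0
      have : D = 0 := by omega
      rw [this] at hDK
      push_cast at hDK
      linarith
    have hn1 : 1 ≤ n := by
      by_contra hn0
      have hn0' : n = 0 := by omega
      have hxy : x = y := by rw [← h0, ← hn, hn0']
      have hdxx : Γ.dist x y ≤ 1 := by rw [← hxy, hself]; omega
      have := hsmall x y hdxx v hv x (hxmem x y)
      have hD0 := htmin' 0 (by omega)
      rw [h0] at hD0
      have : (D : ℝ) ≤ (Γ.dist v x : ℝ) := by exact_mod_cast hD0
      linarith
    set aI := t - 3 * D with haI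
    set bI := min n (t + 3 * D) with hbI
    have haIt : aI ≤ t := by omega
    have htbI : t ≤ bI := by omega
    have hbIn : bI ≤ n := by omega
    obtain ⟨u₁, hu₁, hdu₁⟩ := hslim x y (f aI) v hv
    rcases hu₁ with hu₁ | hu₁
    · -- u₁ ∈ L x (f aI)
      rcases Nat.eq_zero_or_pos aI with haI0 | haIpos
      · -- aI = 0, so f aI = x and u₁ ∈ L x x
        have hfx : f aI = x := by rw [haI0]; exact h0
        rw [hfx] at hu₁
        have hxx : Γ.dist x x ≤ 1 := by rw [hself]; omega
        have hd := hsmall x x hxx u₁ hu₁ x (hxmem x x)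
        have hD0 := htmin' 0 (by omega)
        rw [h0] at hD0
        have ht1 : Γ.dist v x ≤ Γ.dist v u₁ + Γ.dist u₁ x := htri _ _ _
        have hc1 : (D : ℝ) ≤ (Γ.dist v x : ℝ) := by exact_mod_cast hD0
        have hc2 : (Γ.dist v x : ℝ) ≤ (Γ.dist v u₁ : ℝ) + (Γ.dist u₁ x : ℝ) := by
          exact_mod_cast ht1
        linarith
      · -- aI ≥ 1, hence t ≥ 3D + 1
        have h3Dt : 3 * D + 1 ≤ t := by omega
        have haIlt : aI < n := by omega
        have hgeoa : aI = Γ.dist x (f aI) := by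
          rw [← h0]
          have := geod f n hstep hgeo' 0 aI (by omega) (by omega)
          omega
        obtain ⟨i, hi, hb⟩ := IH aI haIlt x (f aI) u₁ hu₁ f h0 rfl
          (fun i hi => hstep i (by omega)) hgeoa
        have hdit : Γ.dist (f i) (f t) = t - i := geod f n hstep hgeo' i t (by omega) (by omega)
        have htr : Γ.dist (f i) (f t) ≤ Γ.dist (f i) v + Γ.dist v (f t) := htri _ _ _
        have h2D : 2 * D ≤ Γ.dist (f i) v := by omega
        have htr2 : Γ.dist (f i) v ≤ Γ.dist (f i) u₁ + Γ.dist u₁ v := htri _ _ _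
        have hc1 : (2 * D : ℝ) ≤ (Γ.dist (f i) u₁ : ℝ) + (Γ.dist u₁ v : ℝ) := by
          exact_mod_cast le_trans h2D htr2
        have hc2 : (Γ.dist (f i) u₁ : ℝ) = (Γ.dist u₁ (f i) : ℝ) := by rw [Γ.dist_comm]
        have hc3 : (Γ.dist u₁ v : ℝ) = (Γ.dist v u₁ : ℝ) := by rw [Γ.dist_comm]
        -- 2D ≤ K₁ + μ but K₁ < D: contradiction
        nlinarith
    · -- u₁ ∈ L (f aI) y
      obtain ⟨u₂, hu₂, hdu₂⟩ := hslim (f aI) y (f bI) u₁ hu₁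
      have hvu₂ : (Γ.dist v u₂ : ℝ) ≤ 2 * μ := by
        have := htri v u₁ u₂
        have hc : (Γ.dist v u₂ : ℝ) ≤ (Γ.dist v u₁ : ℝ) + (Γ.dist u₁ u₂ : ℝ) := by
          exact_mod_cast this
        linarith
      rcases hu₂ with hu₂ | hu₂
      · -- u₂ ∈ L (f aI) (f bI) : apply Claim A
        have hex : ∃ k, 6 * D ≤ 2 ^ k := ⟨6 * D, le_of_lt (Nat.lt_two_pow_self (n := _))⟩
        obtain ⟨k, hk, hkmin⟩ : ∃ k, 6 * D ≤ 2 ^ k ∧ ∀ j, j < k → 2 ^ j < 6 * D :=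
          ⟨Nat.find hex, Nat.find_spec hex, fun j hj => by
            have := Nat.find_min hex hj; omega⟩
        obtain ⟨i, hi, hb⟩ := claimA k (f aI) (f bI) u₂ hu₂ (fun i => f (aI + i)) (bI - aI)
          (by simp)
          (by show f (aI + (bI - aI)) = f bI; rw [Nat.add_sub_cancel' (by omega : aI ≤ bI)])
          (fun i hi => by
            show Γ.dist (f (aI + i)) (f (aI + i + 1)) ≤ 1
            exact hstep (aI + i) (by omega))
          (by omega)
        have hDle := htmin' (aI + i) (by omega)
        have htr : Γ.dist v (f (aI + i)) ≤ Γ.dist v u₂ + Γ.dist u₂ (f (aI + i)) := htri _ _ _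
        have hc1 : (D : ℝ) ≤ (Γ.dist v u₂ : ℝ) + (Γ.dist u₂ (f (aI + i)) : ℝ) := by
          exact_mod_cast le_trans hDle htr
        -- D ≤ 2μ + μ(k+1) = μ(k+3)
        have hDmu : (D : ℝ) ≤ μ * ((k : ℝ) + 3) := by push_cast at hb ⊢; nlinarith
        -- hence B < k
        have hBk : B < k := by
          by_contra hBk'
          have : (k : ℝ) ≤ (B : ℝ) := by exact_mod_cast Nat.le_of_not_lt hBk'
          nlinarith
        have hk1 : 5 ≤ k - 1 := by omega
        have hpow : 2 ^ (k - 1) < 6 * D := hkmin (k - 1) (by omega)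
        -- numeric contradiction
        set m := k - 1 with hm
        have hkm : k = m + 1 := by omega
        have hsq : m * m ≤ 2 ^ m := aux_sq_le_two_pow m (by omega)
        have hmB : (B : ℝ) ≤ (m : ℝ) := by exact_mod_cast (by omega : B ≤ m)
        have hm24 : 24 * μ ≤ (m : ℝ) := le_trans hB24 hmB
        have hc2 : ((2 : ℕ) ^ m : ℝ) < 6 * (D : ℝ) := by exact_mod_cast hpow
        have hc3 : ((m : ℝ)) * (m : ℝ) ≤ ((2 : ℕ) ^ m : ℝ) := by exact_mod_cast hsq
        have hDm : (D : ℝ) ≤ μ * ((m : ℝ) + 4) := by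
          rw [hkm] at hDmu; push_cast at hDmu; linarith
        -- m*m ≥ 24μ*m ≥ 6μ(m+4) > 6D > 2^m ≥ m*m
        nlinarith
      · -- u₂ ∈ L (f bI) y
        rcases Nat.eq_or_lt_of_le hbIn with hbn | hbn
        · -- bI = n, so f bI = y and u₂ ∈ L y y
          have hfy : f bI = y := by rw [hbn]; exact hn
          rw [hfy] at hu₂
          have hyy : Γ.dist y y ≤ 1 := by rw [hself]; omega
          have hd := hsmall y y hyy u₂ hu₂ y (hxmem y y)
          have hDn := htmin' n (by omega)
          rw [hn] at hDn
          have htr : Γ.dist v y ≤ Γ.dist v u₂ + Γ.dist u₂ y := htri _ _ _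
          have hc1 : (D : ℝ) ≤ (Γ.dist v u₂ : ℝ) + (Γ.dist u₂ y : ℝ) := by
            exact_mod_cast le_trans hDn htr
          linarith
        · -- bI < n, so bI = t + 3D
          have hbIt : bI = t + 3 * D := by omega
          have hgeob : n - bI = Γ.dist (f bI) y := by
            rw [← hn]
            have := geod f n hstep hgeo' bI n (by omega) (by omega)
            omega
          have hbIpos : 1 ≤ bI := by omega
          obtain ⟨i, hi, hb⟩ := IH (n - bI) (by omega) (f bI) y u₂ hu₂ (fun i => f (bI + i))
            (by simp)
            (by show f (bI + (n - bI)) = y; rw [Nat.add_sub_cancel' (by omega : bI ≤ n)]; exact hn)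
            (fun i hi => by
              show Γ.dist (f (bI + i)) (f (bI + i + 1)) ≤ 1
              exact hstep (bI + i) (by omega))
            hgeob
          have hdit : Γ.dist (f t) (f (bI + i)) = bI + i - t :=
            geod f n hstep hgeo' t (bI + i) (by omega) (by omega)
          have htr : Γ.dist (f t) (f (bI + i)) ≤ Γ.dist (f t) v + Γ.dist v (f (bI + i)) :=
            htri _ _ _
          have hcm : Γ.dist (f t) v = D := by rw [Γ.dist_comm]
          have h2D : 2 * D ≤ Γ.dist v (f (bI + i)) := by omega
          have htr2 : Γ.dist v (f (bI + i)) ≤ Γ.dist v u₂ + Γ.dist u₂ (f (bI + i)) := htri _ _ _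
          have hc1 : (2 * D : ℝ) ≤ (Γ.dist v u₂ : ℝ) + (Γ.dist u₂ (f (bI + i)) : ℝ) := by
            exact_mod_cast le_trans h2D htr2
          nlinarith
  -- Tautness
  have taut : ∀ x y u : V, u ∈ L x y →
      (Γ.dist x u : ℝ) + (Γ.dist u y : ℝ) ≤ (Γ.dist x y : ℝ) + 2 * K₁ := by
    intro x y u hu
    obtain ⟨p, hp⟩ := hconn.exists_walk_length_eq_dist x y
    have h0 : p.getVert 0 = x := p.getVert_zero
    have hn : p.getVert p.length = y := p.getVert_length
    have hstep : ∀ i < p.length, Γ.dist (p.getVert i) (p.getVert (i + 1)) ≤ 1 := by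
      intro i hi
      have hadj := p.adj_getVert_succ hi
      have := SimpleGraph.dist_le (Walk.cons hadj Walk.nil)
      simpa using this
    obtain ⟨i, hi, hb⟩ := claimH p.length x y u hu p.getVert h0 hn hstep hp
    have hgeo' : p.length = Γ.dist (p.getVert 0) (p.getVert p.length) := by
      rw [h0, hn]; exact hp
    have h1 : Γ.dist (p.getVert 0) (p.getVert i) = i := by
      have := geod p.getVert p.length hstep hgeo' 0 i (by omega) hi; omega
    have h2 : Γ.dist (p.getVert i) (p.getVert p.length) = p.length - i :=
      geod p.getVert p.length hstep hgeo' i p.length hi le_rfl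
    rw [h0] at h1
    rw [hn] at h2
    have t1 : Γ.dist x u ≤ Γ.dist x (p.getVert i) + Γ.dist (p.getVert i) u := htri _ _ _
    have t2 : Γ.dist u y ≤ Γ.dist u (p.getVert i) + Γ.dist (p.getVert i) y := htri _ _ _
    have hcm : Γ.dist (p.getVert i) u = Γ.dist u (p.getVert i) := by rw [Γ.dist_comm]
    have key : Γ.dist x u + Γ.dist u y ≤ Γ.dist x y + 2 * Γ.dist u (p.getVert i) := by
      have hplen : p.length = Γ.dist x y := hp
      omega
    have keyR : (Γ.dist x u : ℝ) + (Γ.dist u y : ℝ) ≤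
        (Γ.dist x y : ℝ) + 2 * (Γ.dist u (p.getVert i) : ℝ) := by exact_mod_cast key
    linarith
  -- Lower bound for the Gromov product
  have low : ∀ w x y u : V, u ∈ L x y →
      ((Γ.dist x w : ℝ) + (Γ.dist y w : ℝ) - (Γ.dist x y : ℝ)) / 2 - K₁ ≤ (Γ.dist w u : ℝ) := by
    intro w x y u hu
    have h1 : (Γ.dist x w : ℝ) ≤ (Γ.dist x u : ℝ) + (Γ.dist u w : ℝ) := by
      exact_mod_cast htri x u w
    have h2 : (Γ.dist y w : ℝ) ≤ (Γ.dist y u : ℝ) + (Γ.dist u w : ℝ) := by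
      exact_mod_cast htri y u w
    have h3 := taut x y u hu
    have hc1 : (Γ.dist y u : ℝ) = (Γ.dist u y : ℝ) := by rw [Γ.dist_comm]
    have hc2 : (Γ.dist u w : ℝ) = (Γ.dist w u : ℝ) := by rw [Γ.dist_comm]
    linarith
  -- Upper bound: some point of L x y is close to w in terms of the Gromov product
  have up : ∀ w x y : V, ∃ u ∈ L x y,
      (Γ.dist w u : ℝ) ≤ ((Γ.dist x w : ℝ) + (Γ.dist y w : ℝ) - (Γ.dist x y : ℝ)) / 2 +
        (2 * K₁ + 3 * μ + 1) := by
    intro w x y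
    have hcind : (Γ.induce (L x y)).Connected := (hLmem x y).2.2
    have hreach := hcind.preconnected ⟨x, hxmem x y⟩ ⟨y, hymem x y⟩
    obtain ⟨W⟩ := hreach
    set tl := W.length with htl
    set vs : ℕ → V := fun i => ((W.getVert i) : V) with hvs
    have hvsmem : ∀ i, vs i ∈ L x y := fun i => (W.getVert i).2
    have hvs0 : vs 0 = x := by simp [hvs, Walk.getVert_zero]
    have hvst : vs tl = y := by simp [hvs, htl, Walk.getVert_length]
    have hvsadj : ∀ i < tl, (Γ.dist (vs i) (vs (i + 1)) : ℝ) ≤ 1 := by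
      intro i hi
      have hadj := W.adj_getVert_succ hi
      have hadj' : Γ.Adj (vs i) (vs (i + 1)) := hadj
      have := SimpleGraph.dist_le (Walk.cons hadj' Walk.nil)
      have h1 : Γ.dist (vs i) (vs (i + 1)) ≤ 1 := by simpa using this
      exact_mod_cast h1
    set Q : ℕ → Prop := fun i => ∃ u ∈ L x w, (Γ.dist (vs i) u : ℝ) ≤ lam with hQ
    have hQ0 : Q 0 := ⟨x, hxmem x w, by rw [hvs0, hself]; exact_mod_cast hlam⟩
    by_cases hQt : Q tl
    · -- y itself is close to L x w
      obtain ⟨u, hu, hdu⟩ := hQt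
      rw [hvst] at hdu
      have h3 := taut x w u hu
      have h1 : (Γ.dist x y : ℝ) ≤ (Γ.dist x u : ℝ) + (Γ.dist u y : ℝ) := by
        exact_mod_cast htri x u y
      have h2 : (Γ.dist y w : ℝ) ≤ (Γ.dist y u : ℝ) + (Γ.dist u w : ℝ) := by
        exact_mod_cast htri y u w
      have hc1 : (Γ.dist u y : ℝ) = (Γ.dist y u : ℝ) := by rw [Γ.dist_comm]
      have hc2 : (Γ.dist w y : ℝ) = (Γ.dist y w : ℝ) := by rw [Γ.dist_comm]
      refine ⟨y, hymem x y, ?_⟩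
      linarith
    · -- crossing argument
      have hcross : ∃ i, i < tl ∧ Q i ∧ ¬ Q (i + 1) := by
        by_contra hc
        push_neg at hc
        have hall : ∀ m, m ≤ tl → Q m := by
          intro m
          induction m with
          | zero => exact fun _ => hQ0
          | succ m IHm =>
            intro hm
            rcases Classical.em (Q (m + 1)) with h | h
            · exact h
            · exact absurd (hc m (by omega) (IHm (by omega))) h
        exact hQt (hall tl le_rfl)
      obtain ⟨i, hitl, hQi, hQi1⟩ := hcross
      obtain ⟨u, hu, hdu⟩ := hQi
      obtain ⟨u', hu', hdu'⟩ := hslim x y w (vs (i + 1)) (hvsmem (i + 1))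
      have hu'w : u' ∈ L w y := by
        rcases hu' with hu' | hu'
        · exact absurd ⟨u', hu', hdu'⟩ hQi1
        · exact hu'
      -- main computation
      have ht1 := taut x w u hu
      have ht2 := taut w y u' hu'w
      have e1 : (Γ.dist x (vs i) : ℝ) ≤ (Γ.dist x u : ℝ) + (Γ.dist u (vs i) : ℝ) := by
        exact_mod_cast htri x u (vs i)
      have e2 : (Γ.dist (vs (i + 1)) y : ℝ) ≤
          (Γ.dist (vs (i + 1)) u' : ℝ) + (Γ.dist u' y : ℝ) := by
        exact_mod_cast htri (vs (i + 1)) u' y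
      have e3 : (Γ.dist x y : ℝ) ≤ (Γ.dist x (vs i) : ℝ) + (Γ.dist (vs i) y : ℝ) := by
        exact_mod_cast htri x (vs i) y
      have e4 : (Γ.dist (vs i) y : ℝ) ≤
          (Γ.dist (vs i) (vs (i + 1)) : ℝ) + (Γ.dist (vs (i + 1)) y : ℝ) := by
        exact_mod_cast htri (vs i) (vs (i + 1)) y
      have e5 : (Γ.dist u w : ℝ) ≤ (Γ.dist u u' : ℝ) + (Γ.dist u' w : ℝ) := by
        exact_mod_cast htri u u' w
      have e6 : (Γ.dist u u' : ℝ) ≤ (Γ.dist u (vs i) : ℝ) + (Γ.dist (vs i) (vs (i + 1)) : ℝ)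
          + (Γ.dist (vs (i + 1)) u' : ℝ) := by
        have t1 : Γ.dist u u' ≤ Γ.dist u (vs (i + 1)) + Γ.dist (vs (i + 1)) u' := htri _ _ _
        have t2 : Γ.dist u (vs (i + 1)) ≤ Γ.dist u (vs i) + Γ.dist (vs i) (vs (i + 1)) :=
          htri _ _ _
        have : Γ.dist u u' ≤ Γ.dist u (vs i) + Γ.dist (vs i) (vs (i + 1))
            + Γ.dist (vs (i + 1)) u' := by omega
        exact_mod_cast this
      have estep := hvsadj i hitl
      have cdu : (Γ.dist u (vs i) : ℝ) = (Γ.dist (vs i) u : ℝ) := by rw [Γ.dist_comm]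
      have cdu' : (Γ.dist u' (vs (i+1)) : ℝ) = (Γ.dist (vs (i+1)) u' : ℝ) := by rw [Γ.dist_comm]
      have cu'w : (Γ.dist u' w : ℝ) = (Γ.dist w u' : ℝ) := by rw [Γ.dist_comm]
      have cwu' : (Γ.dist w u' : ℝ) = (Γ.dist u' w : ℝ) := by rw [Γ.dist_comm]
      have cvw : (Γ.dist w (vs i) : ℝ) ≤ (Γ.dist w u : ℝ) + (Γ.dist u (vs i) : ℝ) := by
        exact_mod_cast htri w u (vs i)
      have cwu : (Γ.dist w u : ℝ) = (Γ.dist u w : ℝ) := by rw [Γ.dist_comm]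
      have cyw : (Γ.dist w y : ℝ) = (Γ.dist y w : ℝ) := by rw [Γ.dist_comm]
      refine ⟨vs i, hvsmem i, ?_⟩
      -- from ht1 + ht2 and the chain of estimates: dist u w ≤ gp + 2K₁ + 2λ + 1
      linarith
  -- Final assembly of the four-point condition
  intro w x y z
  obtain ⟨p, hp, hpd⟩ := up w x z
  obtain ⟨q, hq, hdq⟩ := hslim x z y p hp
  have htr : (Γ.dist w q : ℝ) ≤ (Γ.dist w p : ℝ) + (Γ.dist p q : ℝ) := by
    exact_mod_cast htri w p q
  rcases hq with hq | hq
  · have hl := low w x y q hq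
    have hmin := min_le_left (((Γ.dist x w : ℝ) + (Γ.dist y w : ℝ) - (Γ.dist x y : ℝ)) / 2)
      (((Γ.dist y w : ℝ) + (Γ.dist z w : ℝ) - (Γ.dist y z : ℝ)) / 2)
    linarith
  · have hl := low w y z q hq
    have hmin := min_le_right (((Γ.dist x w : ℝ) + (Γ.dist y w : ℝ) - (Γ.dist x y : ℝ)) / 2)
      (((Γ.dist y w : ℝ) + (Γ.dist z w : ℝ) - (Γ.dist y z : ℝ)) / 2)
    linarith
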